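/- Let A be an n-by-n reciprocal matrix and C = (γ_1→⋯→γ_n→γ_1) a Hamiltonian cycle with cycle product ≤ 1 such that a_{γ_nγ_1} > 1. Define w by w_{γ_1} = 1 and w_{γ_{k+1}} = w_{γ_k}/a_{γ_kγ_{k+1}} for k = 1,...,n−1. Then w ∈ ε_A(C), and w exhibits no order reversal with any entry of A along the cycle C: for each consecutive pair (γ_k, γ_{k+1}) (including (γ_n, γ_1)), a_{γ_kγ_{k+1}} > 1 implies w_{γ_k} > w_{γ_{k+1}}, a_{γ_kγ_{k+1}} < 1 implies w_{γ_k} < w_{γ_{k+1}}, and a_{γ_kγ_{k+1}} = 1 implies w_{γ_k} = w_{γ_{k+1}}. -/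

import Mathlib

def Reciprocal {n : ℕ} (A : Matrix (Fin n) (Fin n) ℝ) : Prop :=
  (∀ i j, 0 < A i j) ∧ ∀ i j, A j i = 1 / A i j

open Fin.NatCast

/-- If the cycle product of `γ` in `A` is at most `1` and the last entry
`a_{γ_n γ_1}` along the cycle is `> 1`, then the vector `w` defined by
`w_{γ_1} = 1`, `w_{γ_{k+1}} = w_{γ_k} / a_{γ_k γ_{k+1}}` lies in `ε_A(C)` and
exhibits no order reversal with any entry of `A` along the cycle. -/
theorem stmt11 {n : ℕ} [NeZero n] (A : Matrix (Fin n) (Fin n) ℝ) (hA : Reciprocal A)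
    (γ : Fin n → Fin n) (hγ : Function.Bijective γ)
    (hprod : (∏ k : Fin n, A (γ k) (γ (k + 1))) ≤ 1)
    (hlast : ∀ k : Fin n, k + 1 = 0 → 1 < A (γ k) (γ 0))
    (w : Fin n → ℝ) (hw1 : w (γ 0) = 1)
    (hwrec : ∀ k : Fin n, k + 1 ≠ 0 →
      w (γ (k + 1)) = w (γ k) / A (γ k) (γ (k + 1))) :
    (∀ i, 0 < w i) ∧
    (∀ k : Fin n, A (γ k) (γ (k + 1)) * w (γ (k + 1)) ≤ w (γ k)) ∧
    (∀ k : Fin n,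
      (1 < A (γ k) (γ (k + 1)) → w (γ (k + 1)) < w (γ k)) ∧
      (A (γ k) (γ (k + 1)) < 1 → w (γ k) < w (γ (k + 1))) ∧
      (A (γ k) (γ (k + 1)) = 1 → w (γ k) = w (γ (k + 1)))) := by
  obtain ⟨hpos, hrec⟩ := hA
  have hdiag : ∀ i, A i i = 1 := by
    intro i
    have h := hrec i i
    have hp := hpos i i
    have h2 : (A i i - 1) * (A i i + 1) = 0 := by field_simp at h; nlinarith
    rcases mul_eq_zero.mp h2 with h3 | h3
    · linarith
    · linarith
  rcases lt_or_ge 1 n with hn | hn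
  · -- main case: 1 < n
    have h1n : (1 : Fin n).val = 1 := by
      simp [Fin.val_one', Nat.mod_eq_of_lt hn]
    have hval : ∀ m : ℕ, m + 1 < n → ((m : Fin n) + 1).val = m + 1 := by
      intro m hm
      have hm' : m < n := Nat.lt_of_succ_lt hm
      simp [Fin.add_def, h1n, Fin.val_natCast, Nat.mod_eq_of_lt hm',
        Nat.mod_eq_of_lt hm]
    have hne : ∀ m : ℕ, m + 1 < n → (m : Fin n) + 1 ≠ 0 := by
      intro m hm hc
      have := hval m hm
      rw [hc] at this
      simp at this
    have hcast : ∀ m : ℕ, m + 1 < n → ((m + 1 : ℕ) : Fin n) = (m : Fin n) + 1 := by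
      intro m hm
      apply Fin.ext
      rw [hval m hm, Fin.val_natCast]
      exact Nat.mod_eq_of_lt hm
    -- positivity along the cycle, by induction
    have hwposN : ∀ m : ℕ, m < n → 0 < w (γ (m : Fin n)) := by
      intro m
      induction m with
      | zero => intro hm; simp only [Nat.cast_zero]; rw [hw1]; norm_num
      | succ m ih =>
        intro hm
        rw [hcast m hm, hwrec _ (hne m hm)]
        exact div_pos (ih (Nat.lt_of_succ_lt hm)) (hpos _ _)
    have hwpos : ∀ k : Fin n, 0 < w (γ k) := by
      intro k
      have := hwposN k.val k.isLt
      rwa [Fin.cast_val_eq_self] at this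
    have hwposAll : ∀ i, 0 < w i := by
      intro i
      obtain ⟨k, rfl⟩ := hγ.surjective i
      exact hwpos k
    set F : ℕ → ℝ := fun j => A (γ (j : Fin n)) (γ ((j : Fin n) + 1)) with hF
    have hFpos : ∀ j, 0 < F j := fun j => hpos _ _
    have hkey : ∀ m : ℕ, m < n → w (γ (m : Fin n)) * ∏ j ∈ Finset.range m, F j = 1 := by
      intro m
      induction m with
      | zero => intro _; simp [hw1]
      | succ m ih =>
        intro hm
        have ih' := ih (Nat.lt_of_succ_lt hm)
        rw [Finset.prod_range_succ, hcast m hm, hwrec _ (hne m hm)]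
        have hFm : A (γ (m : Fin n)) (γ ((m : Fin n) + 1)) = F m := rfl
        rw [hFm]
        have hFne : F m ≠ 0 := ne_of_gt (hFpos m)
        have heq : w (γ (m : Fin n)) / F m * ((∏ j ∈ Finset.range m, F j) * F m) =
            w (γ (m : Fin n)) * ∏ j ∈ Finset.range m, F j := by
          field_simp
        rw [heq]
        exact ih'
    have hn0 : 0 < n := Nat.pos_of_ne_zero (NeZero.ne n)
    have hfull : (∏ k : Fin n, A (γ k) (γ (k + 1))) = ∏ j ∈ Finset.range n, F j := by
      rw [← Fin.prod_univ_eq_prod_range F n]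
      apply Finset.prod_congr rfl
      intro k _
      simp [hF, Fin.cast_val_eq_self]
    have hsplit : (∏ j ∈ Finset.range n, F j) =
        (∏ j ∈ Finset.range (n - 1), F j) * F (n - 1) := by
      conv_lhs => rw [show n = (n - 1) + 1 by omega]
      rw [Finset.prod_range_succ]
    have hPpos : 0 < ∏ j ∈ Finset.range (n - 1), F j :=
      Finset.prod_pos (fun j _ => hFpos j)
    have hlastkey := hkey (n - 1) (by omega)
    have hw' : w (γ ((n - 1 : ℕ) : Fin n)) = (∏ j ∈ Finset.range (n - 1), F j)⁻¹ := by
      rw [inv_eq_one_div, eq_div_iff (ne_of_gt hPpos)]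
      exact hlastkey
    have hwlast : F (n - 1) ≤ w (γ ((n - 1 : ℕ) : Fin n)) := by
      have h2 : F (n - 1) * (∏ j ∈ Finset.range (n - 1), F j) ≤ 1 := by
        rw [hfull, hsplit] at hprod; linarith [hprod]
      rw [hw']
      calc F (n - 1) = F (n - 1) * (∏ j ∈ Finset.range (n - 1), F j) *
            (∏ j ∈ Finset.range (n - 1), F j)⁻¹ := by
            field_simp
        _ ≤ 1 * (∏ j ∈ Finset.range (n - 1), F j)⁻¹ :=
            mul_le_mul_of_nonneg_right h2 (inv_nonneg.mpr hPpos.le)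
        _ = (∏ j ∈ Finset.range (n - 1), F j)⁻¹ := one_mul _
    -- identify the last index
    have hkid : ∀ k : Fin n, k + 1 = 0 → k = ((n - 1 : ℕ) : Fin n) := by
      intro k hk
      have hkv : k.val + 1 = n := by
        by_contra hc
        have hlt : k.val + 1 < n := lt_of_le_of_ne k.isLt (by omega)
        have h2 := hval k.val hlt
        rw [Fin.cast_val_eq_self] at h2
        rw [hk] at h2
        simp at h2
      apply Fin.ext
      rw [Fin.val_natCast, Nat.mod_eq_of_lt (by omega)]
      omega
    refine ⟨hwposAll, ?_, ?_⟩
    · intro k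
      by_cases h : k + 1 = 0
      · rw [h, hw1, mul_one]
        have hk := hkid k h
        have h0 : ((n - 1 : ℕ) : Fin n) + 1 = 0 := by rw [← hk]; exact h
        rw [hk, ← h0]
        exact hwlast
      · rw [hwrec k h, mul_div_cancel₀ _ (ne_of_gt (hpos _ _))]
    · intro k
      by_cases h : k + 1 = 0
      · have hk := hkid k h
        have h0 : ((n - 1 : ℕ) : Fin n) + 1 = 0 := by rw [← hk]; exact h
        have hgt : 1 < A (γ k) (γ (k + 1)) := by rw [h]; exact hlast k h
        refine ⟨fun _ => ?_, fun hlt => absurd hgt (by linarith),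
          fun heq => absurd hgt (by rw [heq]; exact lt_irrefl 1)⟩
        rw [h, hw1]
        have hgt' : 1 < F (n - 1) := by
          have := hlast k h
          rw [hk, ← h0] at this
          exact this
        have : 1 < w (γ ((n - 1 : ℕ) : Fin n)) := lt_of_lt_of_le hgt' hwlast
        rwa [← hk] at this
      · have hwr := hwrec k h
        have hwk := hwpos k
        have hApos := hpos (γ k) (γ (k + 1))
        refine ⟨fun h1 => ?_, fun h1 => ?_, fun h1 => ?_⟩
        · rw [hwr]; exact div_lt_self hwk h1
        · rw [hwr, lt_div_iff₀ hApos]; nlinarith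
        · rw [hwr, h1, div_one]
  · -- n = 1
    have hn1 : n = 1 := le_antisymm hn (Nat.one_le_iff_ne_zero.mpr (NeZero.ne n))
    subst hn1
    have h0 : (0 : Fin 1) + 1 = 0 := rfl
    exact absurd (hlast 0 h0) (by rw [hdiag]; exact lt_irrefl 1)
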